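/- Let (≤₁, τ : S → Fin n) be a pruned 2-tree on a finite set S with m = |S|. Then the Fox–Neuwirth cell FN_{(≤₁,τ)} is homeomorphic to ℝ^{m+n}. -/

import Mathlib

/-- The configuration space `Conf S`: the set of injective maps (configurations)
`p : S → ℝ × ℝ`, as a subset of the product space `S → ℝ × ℝ`. -/
def Conf (S : Type*) : Set (S → ℝ × ℝ) := {p | Function.Injective p}

/-- Condition (I) on a surjection `σ`: consecutive values are distinct. -/
def CondI {S : Type*} {k : ℕ} (σ : Fin k → S) : Prop :=
  ∀ i j : Fin k, (j : ℕ) = (i : ℕ) + 1 → σ i ≠ σ j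

/-- Condition (II): no interleaving pattern `i₁ < j₁ < i₂ < j₂` with
`i₁, i₂ ∈ σ⁻¹(s)` and `j₁, j₂ ∈ σ⁻¹(s')` for `s ≠ s'`. -/
def CondII {S : Type*} {k : ℕ} (σ : Fin k → S) : Prop :=
  ¬ ∃ (s s' : S) (i₁ j₁ i₂ j₂ : Fin k),
      s ≠ s' ∧ i₁ < j₁ ∧ j₁ < i₂ ∧ i₂ < j₂ ∧
      σ i₁ = s ∧ σ i₂ = s ∧ σ j₁ = s' ∧ σ j₂ = s'

/-- `σ ∈ D(S, N)`: a surjection `σ : {1, …, N + |S|} → S` satisfying (I) and (II).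
(The condition `k = N + |S|` is imposed as a separate hypothesis in the theorems.) -/
def MemD {S : Type*} {k : ℕ} (σ : Fin k → S) : Prop :=
  Function.Surjective σ ∧ CondI σ ∧ CondII σ

/-- Condition (C1) on a configuration `p`: if some element of `σ⁻¹(s)` lies strictly
between two elements of `σ⁻¹(s')` (for `s ≠ s'`) then `x_s < x_{s'}`. -/
def CondC1 {S : Type*} {k : ℕ} (σ : Fin k → S) (p : S → ℝ × ℝ) : Prop :=
  ∀ s s' : S, s ≠ s' →
    (∃ i j₁ j₂ : Fin k, σ i = s ∧ σ j₁ = s' ∧ σ j₂ = s' ∧ j₁ < i ∧ i < j₂) →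
    (p s).1 < (p s').1

/-- Condition (C2) on a configuration `p`: if `x_s = x_{s'}` (for `s ≠ s'`) and every
element of `σ⁻¹(s)` is smaller than every element of `σ⁻¹(s')` then `y_s < y_{s'}`. -/
def CondC2 {S : Type*} {k : ℕ} (σ : Fin k → S) (p : S → ℝ × ℝ) : Prop :=
  ∀ s s' : S, s ≠ s' → (p s).1 = (p s').1 →
    (∀ i j : Fin k, σ i = s → σ j = s' → i < j) →
    (p s).2 < (p s').2

/-- A pruned 2-tree on `S`: a linear order `r` (as a `≤`-relation) together with a
surjection `τ : S → Fin n` which is monotone with respect to `r`. -/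
def IsPruned2Tree {S : Type*} {n : ℕ} (r : S → S → Prop) (τ : S → Fin n) : Prop :=
  IsLinearOrder S r ∧ Function.Surjective τ ∧ ∀ s s', r s s' → τ s ≤ τ s'

/-- The Fox–Neuwirth cell of a 2-tree `(r, τ)`: configurations `p` such that
(i) `τ s < τ s'` implies `x_s < x_{s'}`, and (ii) `τ s = τ s'` and `s <₁ s'`
imply `x_s = x_{s'}` and `y_s < y_{s'}`. -/
def FNcell {S : Type*} {n : ℕ} (r : S → S → Prop) (τ : S → Fin n) :
    Set (S → ℝ × ℝ) :=
  {p | Function.Injective p ∧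
    (∀ s s', τ s < τ s' → (p s).1 < (p s').1) ∧
    (∀ s s', τ s = τ s' → r s s' → s ≠ s' →
      (p s).1 = (p s').1 ∧ (p s).2 < (p s').2)}

/-- `σ ∈ D(τ, N)`: the additional conditions (B) and (C) relative to the 2-tree
`(r, τ)` (conditions (I), (II) and surjectivity, i.e. `σ ∈ D(S, N)`, are imposed
separately). -/
def MemDtree {S : Type*} {n k : ℕ} (r : S → S → Prop) (τ : S → Fin n)
    (σ : Fin k → S) : Prop :=
  (∀ s s' : S, s ≠ s' →
      (∃ i j₁ j₂ : Fin k, σ i = s ∧ σ j₁ = s' ∧ σ j₂ = s' ∧ j₁ < i ∧ i < j₂) →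
      τ s < τ s') ∧
  (∀ s s' : S, τ s = τ s' → r s s' → s ≠ s' →
      ∀ i j : Fin k, σ i = s → σ j = s' → i < j)



section FNAux

open Set Real

private lemma FN_combo_lt {a b x y x' y' : ℝ} (ha : 0 ≤ a) (hb : 0 ≤ b) (hab : a + b = 1)
    (h1 : x < x') (h2 : y < y') : a * x + b * y < a * x' + b * y' := by
  rcases eq_or_lt_of_le ha with h0 | hpos
  · have hb1 : b = 1 := by linarith
    rw [← h0, hb1]; simpa using h2
  · exact add_lt_add_of_lt_of_le (mul_lt_mul_of_pos_left h1 hpos)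
      (mul_le_mul_of_nonneg_left h2.le hb)

private lemma FN_homeo_of_open_convex_bounded {E : Type*} [NormedAddCommGroup E]
    [NormedSpace ℝ E] {s : Set E} (ho : IsOpen s) (hc : Convex ℝ s)
    (hb : Bornology.IsBounded s) (hne : s.Nonempty) : Nonempty (↥s ≃ₜ E) := by
  obtain ⟨e, h1, -, -⟩ := exists_homeomorph_image_interior_closure_frontier_eq_unitBall hc
    (by rwa [ho.interior_eq]) hb
  rw [ho.interior_eq] at h1
  exact ⟨(e.image s).trans ((Homeomorph.setCongr h1).trans Homeomorph.unitBall.symm)⟩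

/-- The model open set. -/
private def FNOmega {S : Type*} {n : ℕ} (r : S → S → Prop) (τ : S → Fin n) :
    Set ((Fin n → ℝ) × (S → ℝ)) :=
  {z | (∀ t t' : Fin n, t < t' → z.1 t < z.1 t') ∧
    (∀ t, z.1 t ∈ Set.Ioo (-(Real.pi/2)) (Real.pi/2)) ∧
    (∀ a b : S, τ a = τ b → r a b → a ≠ b → z.2 a < z.2 b) ∧
    (∀ a, z.2 a ∈ Set.Ioo (-(Real.pi/2)) (Real.pi/2))}

private lemma FNOmega_isOpen {S : Type*} [Finite S] {n : ℕ} (r : S → S → Prop)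
    (τ : S → Fin n) : IsOpen (FNOmega r τ) := by
  classical
  have hrw : FNOmega r τ =
      (⋂ q : Fin n × Fin n, {z : (Fin n → ℝ) × (S → ℝ) | q.1 < q.2 → z.1 q.1 < z.1 q.2}) ∩
      ((⋂ t : Fin n, {z : (Fin n → ℝ) × (S → ℝ) | z.1 t ∈ Set.Ioo (-(Real.pi/2)) (Real.pi/2)}) ∩
      ((⋂ q : S × S, {z : (Fin n → ℝ) × (S → ℝ) |
          τ q.1 = τ q.2 ∧ r q.1 q.2 ∧ q.1 ≠ q.2 → z.2 q.1 < z.2 q.2}) ∩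
      (⋂ a : S, {z : (Fin n → ℝ) × (S → ℝ) | z.2 a ∈ Set.Ioo (-(Real.pi/2)) (Real.pi/2)}))) := by
    ext z
    simp only [FNOmega, Set.mem_setOf_eq, Set.mem_inter_iff, Set.mem_iInter, Prod.forall,
      and_imp]
  rw [hrw]
  refine IsOpen.inter ?_ (IsOpen.inter ?_ (IsOpen.inter ?_ ?_))
  · refine isOpen_iInter_of_finite fun q => ?_
    by_cases hq : q.1 < q.2
    · have : {z : (Fin n → ℝ) × (S → ℝ) | q.1 < q.2 → z.1 q.1 < z.1 q.2}
          = {z | z.1 q.1 < z.1 q.2} := by ext z; simp [hq]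
      rw [this]
      exact isOpen_lt ((continuous_apply q.1).comp continuous_fst)
        ((continuous_apply q.2).comp continuous_fst)
    · have : {z : (Fin n → ℝ) × (S → ℝ) | q.1 < q.2 → z.1 q.1 < z.1 q.2} = Set.univ := by
        ext z; simp [hq]
      rw [this]; exact isOpen_univ
  · exact isOpen_iInter_of_finite fun t =>
      isOpen_Ioo.preimage ((continuous_apply t).comp continuous_fst)
  · refine isOpen_iInter_of_finite fun q => ?_
    by_cases hq : τ q.1 = τ q.2 ∧ r q.1 q.2 ∧ q.1 ≠ q.2
    · have : {z : (Fin n → ℝ) × (S → ℝ) |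
          τ q.1 = τ q.2 ∧ r q.1 q.2 ∧ q.1 ≠ q.2 → z.2 q.1 < z.2 q.2}
          = {z | z.2 q.1 < z.2 q.2} := by ext z; simp [hq]
      rw [this]
      exact isOpen_lt ((continuous_apply q.1).comp continuous_snd)
        ((continuous_apply q.2).comp continuous_snd)
    · have : {z : (Fin n → ℝ) × (S → ℝ) |
          τ q.1 = τ q.2 ∧ r q.1 q.2 ∧ q.1 ≠ q.2 → z.2 q.1 < z.2 q.2} = Set.univ := by
        ext z; simp only [Set.mem_setOf_eq, Set.mem_univ, iff_true]; exact fun h => absurd h hq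
      rw [this]; exact isOpen_univ
  · exact isOpen_iInter_of_finite fun a =>
      isOpen_Ioo.preimage ((continuous_apply a).comp continuous_snd)

private lemma FNOmega_convex {S : Type*} {n : ℕ} (r : S → S → Prop) (τ : S → Fin n) :
    Convex ℝ (FNOmega r τ) := by
  rintro z ⟨z1, z2, z3, z4⟩ w ⟨w1, w2, w3, w4⟩ a b ha hb hab
  refine ⟨fun t t' htt => ?_, fun t => ?_, fun s s' h1 h2 h3 => ?_, fun s => ?_⟩
  · have := FN_combo_lt ha hb hab (z1 t t' htt) (w1 t t' htt)
    simpa [Prod.fst_add, Prod.smul_fst, smul_eq_mul] using this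
  · have := convex_Ioo (-(Real.pi/2)) (Real.pi/2) (z2 t) (w2 t) ha hb hab
    simpa [Prod.fst_add, Prod.smul_fst, smul_eq_mul] using this
  · have := FN_combo_lt ha hb hab (z3 s s' h1 h2 h3) (w3 s s' h1 h2 h3)
    simpa [Prod.snd_add, Prod.smul_snd, smul_eq_mul] using this
  · have := convex_Ioo (-(Real.pi/2)) (Real.pi/2) (z4 s) (w4 s) ha hb hab
    simpa [Prod.snd_add, Prod.smul_snd, smul_eq_mul] using this

private lemma FNOmega_isBounded {S : Type*} [Fintype S] {n : ℕ} (r : S → S → Prop)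
    (τ : S → Fin n) : Bornology.IsBounded (FNOmega r τ) := by
  rw [isBounded_iff_forall_norm_le]
  refine ⟨Real.pi/2, ?_⟩
  rintro z ⟨-, z2, -, z4⟩
  have h2 : (0:ℝ) ≤ Real.pi/2 := by positivity
  rw [Prod.norm_def]
  refine max_le ?_ ?_
  · rw [pi_norm_le_iff_of_nonneg h2]
    intro t
    rw [Real.norm_eq_abs, abs_le]
    exact ⟨by linarith [(z2 t).1], (z2 t).2.le⟩
  · rw [pi_norm_le_iff_of_nonneg h2]
    intro a
    rw [Real.norm_eq_abs, abs_le]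
    exact ⟨by linarith [(z4 a).1], (z4 a).2.le⟩

private lemma FNOmega_nonempty {S : Type*} [Fintype S] {n : ℕ} (r : S → S → Prop)
    (τ : S → Fin n) [IsLinearOrder S r] : (FNOmega r τ).Nonempty := by
  classical
  refine ⟨(fun t => Real.arctan ((t : ℕ) : ℝ),
      fun a => Real.arctan (((Finset.univ.filter (fun u => r u a ∧ u ≠ a)).card : ℕ) : ℝ)),
    fun t t' htt => ?_, fun t => Real.arctan_mem_Ioo _, fun a b h1 h2 h3 => ?_,
    fun a => Real.arctan_mem_Ioo _⟩
  · exact Real.arctan_strictMono (Nat.cast_lt.2 htt)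
  · refine Real.arctan_strictMono (Nat.cast_lt.2 (Finset.card_lt_card ?_))
    have hsub : Finset.univ.filter (fun u => r u a ∧ u ≠ a) ⊆
        Finset.univ.filter (fun u => r u b ∧ u ≠ b) := by
      intro u hu
      simp only [Finset.mem_filter, Finset.mem_univ, true_and] at hu ⊢
      refine ⟨trans_of r hu.1 h2, fun hub => ?_⟩
      exact h3 (antisymm_of r h2 (hub ▸ hu.1))
    rw [Finset.ssubset_iff_of_subset hsub]
    refine ⟨a, ?_, ?_⟩
    · simp only [Finset.mem_filter, Finset.mem_univ, true_and]; exact ⟨h2, h3⟩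
    · simp

end FNAux

private lemma FNcell_homeo_FNOmega {S : Type*} {n : ℕ} (r : S → S → Prop) (τ : S → Fin n)
    (h : IsPruned2Tree r τ) : Nonempty (↥(FNcell r τ) ≃ₜ ↥(FNOmega r τ)) := by
  classical
  obtain ⟨hlin, hτ, -⟩ := h
  haveI : IsLinearOrder S r := hlin
  set sec : Fin n → S := Function.surjInv hτ with hsecdef
  have hsec : ∀ t, τ (sec t) = t := fun t => Function.surjInv_eq hτ t
  -- x coordinates agree on fibers of τ
  have fiberx : ∀ p ∈ FNcell r τ, ∀ a b : S, τ a = τ b → (p a).1 = (p b).1 := by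
    rintro p ⟨-, -, hii⟩ a b hab
    by_cases hab' : a = b
    · rw [hab']
    · rcases total_of r a b with hr | hr
      · exact (hii a b hab hr hab').1
      · exact ((hii b a hab.symm hr (Ne.symm hab')).1).symm
  refine ⟨{
    toFun := fun p => ⟨(fun t => Real.arctan ((p.1 (sec t)).1),
                        fun a => Real.arctan ((p.1 a).2)), ?_⟩
    invFun := fun z => ⟨fun a => (Real.tan (z.1.1 (τ a)), Real.tan (z.1.2 a)), ?_⟩
    left_inv := ?_
    right_inv := ?_
    continuous_toFun := ?_
    continuous_invFun := ?_ }⟩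
  · -- forward membership
    obtain ⟨-, hi, hii⟩ := p.2
    refine ⟨fun t t' htt => ?_, fun t => Real.arctan_mem_Ioo _,
      fun a b h1 h2 h3 => ?_, fun a => Real.arctan_mem_Ioo _⟩
    · exact Real.arctan_strictMono (hi _ _ (by rw [hsec, hsec]; exact htt))
    · exact Real.arctan_strictMono (hii a b h1 h2 h3).2
  · -- inverse membership
    obtain ⟨w1, w2, w3, w4⟩ := z.2
    have hxlt : ∀ a b : S, τ a < τ b → Real.tan (z.1.1 (τ a)) < Real.tan (z.1.1 (τ b)) :=
      fun a b hab => Real.strictMonoOn_tan (w2 _) (w2 _) (w1 _ _ hab)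
    have hylt : ∀ a b : S, τ a = τ b → r a b → a ≠ b →
        Real.tan (z.1.2 a) < Real.tan (z.1.2 b) :=
      fun a b h1 h2 h3 => Real.strictMonoOn_tan (w4 _) (w4 _) (w3 a b h1 h2 h3)
    refine ⟨?_, fun a b hab => hxlt a b hab,
      fun a b h1 h2 h3 => ⟨by simp only [h1], hylt a b h1 h2 h3⟩⟩
    intro a b hab
    by_contra hne
    have h1 : Real.tan (z.1.1 (τ a)) = Real.tan (z.1.1 (τ b)) := congrArg Prod.fst hab
    have h2 : Real.tan (z.1.2 a) = Real.tan (z.1.2 b) := congrArg Prod.snd hab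
    have hτab : τ a = τ b := by
      rcases lt_trichotomy (τ a) (τ b) with hlt | heq | hlt
      · exact absurd h1 (ne_of_lt (hxlt a b hlt))
      · exact heq
      · exact absurd h1.symm (ne_of_lt (hxlt b a hlt))
    rcases total_of r a b with hr | hr
    · exact absurd h2 (ne_of_lt (hylt a b hτab hr hne))
    · exact absurd h2.symm (ne_of_lt (hylt b a hτab.symm hr (Ne.symm hne)))
  · -- left inverse
    rintro ⟨p, hp⟩
    apply Subtype.ext
    funext a
    show (Real.tan (Real.arctan ((p (sec (τ a))).1)), Real.tan (Real.arctan ((p a).2))) = p a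
    rw [Real.tan_arctan, Real.tan_arctan]
    exact Prod.ext (fiberx p hp _ _ (hsec (τ a))) rfl
  · -- right inverse
    rintro ⟨z, hz⟩
    obtain ⟨-, w2, -, w4⟩ := hz
    apply Subtype.ext
    refine Prod.ext (funext fun t => ?_) (funext fun a => ?_)
    · show Real.arctan (Real.tan (z.1 (τ (sec t)))) = z.1 t
      rw [hsec]
      exact Real.arctan_tan (w2 t).1 (w2 t).2
    · exact Real.arctan_tan (w4 a).1 (w4 a).2
  · -- continuity forward
    apply Continuous.subtype_mk
    refine Continuous.prodMk ?_ ?_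
    · exact continuous_pi fun t => Real.continuous_arctan.comp
        (continuous_fst.comp ((continuous_apply (sec t)).comp continuous_subtype_val))
    · exact continuous_pi fun a => Real.continuous_arctan.comp
        (continuous_snd.comp ((continuous_apply a).comp continuous_subtype_val))
  · -- continuity backward
    have htan : ∀ (f : ↥(FNOmega r τ) → ℝ), Continuous f →
        (∀ z, f z ∈ Set.Ioo (-(Real.pi/2)) (Real.pi/2)) →
        Continuous fun z => Real.tan (f z) := by
      intro f hf hmem
      rw [continuous_iff_continuousAt]
      exact fun z => (Real.continuousAt_tan.2
        (Real.cos_pos_of_mem_Ioo (hmem z)).ne').comp hf.continuousAt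
    apply Continuous.subtype_mk
    refine continuous_pi fun a => Continuous.prodMk ?_ ?_
    · exact htan _ ((continuous_apply (τ a)).comp (continuous_fst.comp continuous_subtype_val))
        (fun z => z.2.2.1 (τ a))
    · exact htan _ ((continuous_apply a).comp (continuous_snd.comp continuous_subtype_val))
        (fun z => z.2.2.2.2 a)

/-- The Fox–Neuwirth cell of a pruned 2-tree `(r, τ : S → Fin n)` on
a finite set `S` with `m = |S|` is homeomorphic to `ℝ^{m+n}`. -/

theorem statement4 {S : Type*} [Fintype S] {n : ℕ}
    (r : S → S → Prop) (τ : S → Fin n) (h : IsPruned2Tree r τ) :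
    Nonempty (↥(FNcell r τ) ≃ₜ (Fin (Fintype.card S + n) → ℝ)) := by
  classical
  haveI : IsLinearOrder S r := h.1
  obtain ⟨A⟩ := FNcell_homeo_FNOmega r τ h
  obtain ⟨B⟩ := FN_homeo_of_open_convex_bounded (FNOmega_isOpen r τ) (FNOmega_convex r τ)
    (FNOmega_isBounded r τ) (FNOmega_nonempty r τ)
  obtain ⟨C⟩ := FiniteDimensional.nonempty_continuousLinearEquiv_of_finrank_eq
    (𝕜 := ℝ) (E := (Fin n → ℝ) × (S → ℝ)) (F := Fin (Fintype.card S + n) → ℝ) (by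
      rw [Module.finrank_prod, Module.finrank_fin_fun, Module.finrank_pi,
        Module.finrank_fin_fun]
      omega)
  exact ⟨A.trans (B.trans C.toHomeomorph)⟩
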